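/- (Barwise–Moschovakis theorem.) Let φ(P,x) be an FO-formula over a relational signature extended with an extra unary predicate P, in which every occurrence of P is positive. Then μP.φ is FO-definable (there is an FO-formula ψ(x) over the base signature such that for every structure A and every element a, a belongs to the least fixed point of f_φ^A iff A ⊨ ψ(a)) if and only if φ(P,x) is bounded over the class of all structures. -/

import Mathlib

open FirstOrder

/-- Relation symbols of the language consisting of a single unary predicate `P`. -/
def UnRel : ℕ → Type
  | 1 => Unit
  | _ => Empty

/-- The language consisting of a single unary predicate `P`. -/
def unaryLang : FirstOrder.Language := ⟨fun _ => Empty, UnRel⟩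

/-- The structure on `A` interpreting the unary predicate `P` as the set `X`. -/
def unaryStructure {A : Type} (X : Set A) : unaryLang.Structure A where
  funMap := fun f _ => Empty.elim f
  RelMap := fun {n} r =>
    match n, r with
    | 1, _ => fun v => v 0 ∈ X

/-- The expansion of an `L`-structure on `A` to the language `L.sum unaryLang`,
interpreting the extra unary predicate `P` as `X`. -/
def extStructure (L : FirstOrder.Language) {A : Type} [L.Structure A] (X : Set A) :
    (L.sum unaryLang).Structure A :=
  letI : unaryLang.Structure A := unaryStructure X
  inferInstance

/-- `Positive true φ` says that every occurrence of the extra predicate `P` in `φ` is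
positive (under an even number of negations); `Positive false φ` that every occurrence
is negative. -/
def Positive {L : FirstOrder.Language} {α : Type} :
    Bool → ∀ {n : ℕ}, (L.sum unaryLang).BoundedFormula α n → Prop
  | _, _, .falsum => True
  | _, _, .equal _ _ => True
  | true, _, .rel _ _ => True
  | false, _, .rel r _ => (match r with | Sum.inl _ => True | Sum.inr _ => False)
  | b, _, .imp f g => Positive (!b) f ∧ Positive b g
  | b, _, .all f => Positive b f

/-- The monotone operator `f_φ^A` induced by `φ(P,x)` on a structure `A`:
`f_φ^A(X) = {a ∈ A : A ⊨ φ(X,a)}`. -/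
def fOp (L : FirstOrder.Language) {A : Type} [L.Structure A]
    (φ : (L.sum unaryLang).Formula (Fin 1)) (X : Set A) : Set A :=
  letI := extStructure L X
  {a | φ.Realize (fun _ => a)}

/-- The least fixed point of a monotone set operator, as the intersection of
all prefixed points. -/
def lfpSet {A : Type} (f : Set A → Set A) : Set A := ⋂₀ {X | f X ⊆ X}

/-- `φ(P,x)` is bounded over the class of all structures: the least fixed point is
reached in at most `n` iterations from `∅`, uniformly over all structures. -/
def Bounded (L : FirstOrder.Language) (φ : (L.sum unaryLang).Formula (Fin 1)) : Prop :=
  ∃ n : ℕ, ∀ (A : Type) [L.Structure A] [Nonempty A],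
    (fOp L φ (A := A))^[n] ∅ = (fOp L φ (A := A))^[n + 1] ∅

-- ============ auxiliary development ============
namespace BM

open FirstOrder.Language

instance : unaryLang.IsRelational := fun _ => ⟨fun f => f.elim⟩

variable {L : FirstOrder.Language} [L.IsRelational]

/-- Map a term of the sum language back to `L` (all terms are variables). -/
def tmap {β : Type*} : (L.sum unaryLang).Term β → L.Term β
  | .var v => .var v
  | .func f _ => isEmptyElim f

/-- The variable of a term of the sum language. -/
def tvar {β : Type*} : (L.sum unaryLang).Term β → β
  | .var v => v
  | .func f _ => isEmptyElim f

theorem tmap_eq_var {β : Type*} (t : (L.sum unaryLang).Term β) :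
    tmap t = FirstOrder.Language.Term.var (tvar t) := by
  cases t with
  | var v => rfl
  | func f _ => exact isEmptyElim f

theorem tmap_realize {A : Type} [iA : L.Structure A] {β : Type*} (X : Set A)
    (t : (L.sum unaryLang).Term β) (v : β → A) :
    @Term.realize (L.sum unaryLang) A (extStructure L X) β v t = (tmap t).realize v := by
  cases t with
  | var v => rfl
  | func f _ => exact isEmptyElim f

theorem tvar_realize {A : Type} [iA : L.Structure A] {β : Type*}
    (t : (L.sum unaryLang).Term β) (v : β → A) :
    (tmap t).realize v = v (tvar t) := by
  rw [tmap_eq_var]; rfl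

theorem tmap_realize' {A : Type} [iA : L.Structure A] {β : Type*} (X : Set A)
    (t : (L.sum unaryLang).Term β) (v : β → A) :
    @Term.realize (L.sum unaryLang) A (extStructure L X) β v t = v (tvar t) := by
  rw [tmap_realize, tvar_realize]

/-- `χ.Realize` in the expansion of `A` where `P` is interpreted as `X`. -/
def RealizeExt (L : FirstOrder.Language) [L.IsRelational] {A : Type} [L.Structure A] (X : Set A)
    {n : ℕ} (χ : (L.sum unaryLang).BoundedFormula (Fin 1) n)
    (v : Fin 1 → A) (xs : Fin n → A) : Prop :=
  @BoundedFormula.Realize (L.sum unaryLang) A (extStructure L X) (Fin 1) n χ v xs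

section RealizeExtLemmas

variable {A : Type} [L.Structure A] (X : Set A)

theorem realizeExt_falsum {n : ℕ} (v : Fin 1 → A) (xs : Fin n → A) :
    RealizeExt L X (.falsum) v xs ↔ False := Iff.rfl

theorem realizeExt_imp {n : ℕ} (f g : (L.sum unaryLang).BoundedFormula (Fin 1) n)
    (v : Fin 1 → A) (xs : Fin n → A) :
    RealizeExt L X (f.imp g) v xs ↔ (RealizeExt L X f v xs → RealizeExt L X g v xs) := Iff.rfl

theorem realizeExt_all {n : ℕ} (f : (L.sum unaryLang).BoundedFormula (Fin 1) (n + 1))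
    (v : Fin 1 → A) (xs : Fin n → A) :
    RealizeExt L X f.all v xs ↔ ∀ y : A, RealizeExt L X f v (Fin.snoc xs y) := Iff.rfl

theorem realizeExt_equal {n : ℕ} (t₁ t₂ : (L.sum unaryLang).Term (Fin 1 ⊕ Fin n))
    (v : Fin 1 → A) (xs : Fin n → A) :
    RealizeExt L X (.equal t₁ t₂) v xs ↔
      Sum.elim v xs (tvar t₁) = Sum.elim v xs (tvar t₂) := by
  unfold RealizeExt
  rw [show (@BoundedFormula.Realize (L.sum unaryLang) A (extStructure L X) (Fin 1) n
      (.equal t₁ t₂) v xs) =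
      (@Term.realize (L.sum unaryLang) A (extStructure L X) _ (Sum.elim v xs) t₁ =
       @Term.realize (L.sum unaryLang) A (extStructure L X) _ (Sum.elim v xs) t₂) from rfl,
    tmap_realize' X t₁, tmap_realize' X t₂]

theorem realizeExt_rel_inl {n l : ℕ} (r : L.Relations l)
    (ts : Fin l → (L.sum unaryLang).Term (Fin 1 ⊕ Fin n))
    (v : Fin 1 → A) (xs : Fin n → A) :
    RealizeExt L X (.rel (Sum.inl r) ts) v xs ↔
      Structure.RelMap r (fun i => Sum.elim v xs (tvar (ts i))) := by
  unfold RealizeExt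
  rw [show (@BoundedFormula.Realize (L.sum unaryLang) A (extStructure L X) (Fin 1) n
      (.rel (Sum.inl r) ts) v xs) =
      Structure.RelMap r (fun i =>
        @Term.realize (L.sum unaryLang) A (extStructure L X) _ (Sum.elim v xs) (ts i)) from rfl]
  simp only [tmap_realize' X]

theorem realizeExt_rel_inr {n : ℕ} (r : unaryLang.Relations 1)
    (ts : Fin 1 → (L.sum unaryLang).Term (Fin 1 ⊕ Fin n))
    (v : Fin 1 → A) (xs : Fin n → A) :
    RealizeExt L X (.rel (Sum.inr r) ts) v xs ↔ Sum.elim v xs (tvar (ts 0)) ∈ X := by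
  unfold RealizeExt
  rw [show (@BoundedFormula.Realize (L.sum unaryLang) A (extStructure L X) (Fin 1) n
      (.rel (Sum.inr r) ts) v xs) =
      ((fun w : Fin 1 → A => w 0 ∈ X) (fun i =>
        @Term.realize (L.sum unaryLang) A (extStructure L X) _ (Sum.elim v xs) (ts i))) from rfl]
  simp only [tmap_realize' X]

end RealizeExtLemmas

theorem realize_mono {A : Type} [L.Structure A] {X Y : Set A} (hXY : X ⊆ Y) :
    ∀ {n} (χ : (L.sum unaryLang).BoundedFormula (Fin 1) n) (b : Bool), Positive b χ →
      ∀ (v : Fin 1 → A) (xs : Fin n → A),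
        RealizeExt L (cond b X Y) χ v xs → RealizeExt L (cond b Y X) χ v xs := by
  intro n χ
  induction χ with
  | falsum => intro b _ v xs h; exact ((realizeExt_falsum _ v xs).1 h).elim
  | equal t₁ t₂ =>
      intro b _ v xs h
      exact (realizeExt_equal _ t₁ t₂ v xs).2 ((realizeExt_equal _ t₁ t₂ v xs).1 h)
  | @rel m l R ts =>
      intro b hb v xs h
      cases R with
      | inl r => exact (realizeExt_rel_inl _ r ts v xs).2 ((realizeExt_rel_inl _ r ts v xs).1 h)
      | inr r =>
          cases l with
          | zero => exact Empty.elim r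
          | succ l =>
            cases l with
            | zero =>
                cases b with
                | false => exact hb.elim
                | true =>
                    exact (realizeExt_rel_inr _ r ts v xs).2
                      (hXY ((realizeExt_rel_inr _ r ts v xs).1 h))
            | succ l => exact Empty.elim r
  | imp f g ihf ihg =>
      intro b hb v xs h
      have h1 : Positive (!b) f := by cases b <;> exact hb.1
      have h2 : Positive b g := by cases b <;> exact hb.2
      rw [realizeExt_imp] at h ⊢
      intro hf
      have hf' : RealizeExt L (cond (!b) X Y) f v xs := by cases b <;> exact hf
      have h2' := ihf (!b) h1 v xs hf'
      have hf'' : RealizeExt L (cond b X Y) f v xs := by cases b <;> exact h2'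
      exact ihg b h2 v xs (h hf'')
  | all f ihf =>
      intro b hb v xs h
      have hb' : Positive b f := by cases b <;> exact hb
      rw [realizeExt_all] at h ⊢
      intro y
      exact ihf b hb' v _ (h y)

/-- Substitute the `L`-formula `ψ` for the unary predicate `P`. -/
def substP (ψ : L.Formula (Fin 1)) :
    ∀ {n : ℕ}, (L.sum unaryLang).BoundedFormula (Fin 1) n → L.BoundedFormula (Fin 1) n
  | _, .falsum => .falsum
  | _, .equal t₁ t₂ => .equal (.var (tvar t₁)) (.var (tvar t₂))
  | _, .rel (Sum.inl r) ts => .rel r (fun i => .var (tvar (ts i)))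
  | _, @FirstOrder.Language.BoundedFormula.rel _ _ _ 1 (Sum.inr _) ts =>
      FirstOrder.Language.BoundedFormula.relabel (fun _ : Fin 1 => tvar (ts 0)) ψ
  | _, @FirstOrder.Language.BoundedFormula.rel _ _ _ 0 (Sum.inr r) _ => Empty.elim r
  | _, @FirstOrder.Language.BoundedFormula.rel _ _ _ (_+2) (Sum.inr r) _ => Empty.elim r
  | _, .imp f g => (substP ψ f).imp (substP ψ g)
  | _, .all f => (substP ψ f).all

theorem substP_realize {A : Type} [L.Structure A] (ψ : L.Formula (Fin 1)) :
    ∀ {n} (χ : (L.sum unaryLang).BoundedFormula (Fin 1) n) (v : Fin 1 → A) (xs : Fin n → A),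
      (substP ψ χ).Realize v xs ↔ RealizeExt L {a | ψ.Realize (fun _ => a)} χ v xs := by
  intro n χ
  induction χ with
  | falsum => intro v xs; exact Iff.rfl
  | equal t₁ t₂ =>
      intro v xs
      rw [realizeExt_equal]
      exact Iff.rfl
  | @rel m l R ts =>
      intro v xs
      cases R with
      | inl r =>
          rw [realizeExt_rel_inl]
          cases l with
          | zero => exact Iff.rfl
          | succ l =>
            cases l with
            | zero => exact Iff.rfl
            | succ l => exact Iff.rfl
      | inr r =>
          cases l with
          | zero => exact Empty.elim r
          | succ l =>
            cases l with
            | zero =>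
                have hval : (Sum.elim v (xs ∘ Fin.castAdd 0) ∘ (fun _ : Fin 1 => tvar (ts 0))) =
                    (fun _ : Fin 1 => Sum.elim v xs (tvar (ts 0))) := by
                  funext j
                  rfl
                rw [realizeExt_rel_inr]
                show (FirstOrder.Language.BoundedFormula.relabel
                    (fun _ : Fin 1 => tvar (ts 0)) ψ).Realize v xs ↔ _
                rw [FirstOrder.Language.BoundedFormula.realize_relabel, hval]
                exact iff_of_eq (congrArg _ (Subsingleton.elim _ _))
            | succ l => exact Empty.elim r
  | imp f g ihf ihg =>
      intro v xs
      rw [realizeExt_imp]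
      show ((substP ψ f).imp (substP ψ g)).Realize v xs ↔ _
      rw [FirstOrder.Language.BoundedFormula.realize_imp, ihf, ihg]
  | all f ihf =>
      intro v xs
      rw [realizeExt_all]
      show ((substP ψ f).all).Realize v xs ↔ _
      rw [FirstOrder.Language.BoundedFormula.realize_all]
      exact forall_congr' fun y => ihf v _

section Stages

variable {A : Type} [L.Structure A] (φ : (L.sum unaryLang).Formula (Fin 1))

theorem mem_fOp_iff (X : Set A) (a : A) :
    a ∈ fOp L φ X ↔ RealizeExt L X φ (fun _ => a) default := Iff.rfl

theorem fOp_mono (hφ : Positive true φ) {X Y : Set A} (hXY : X ⊆ Y) :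
    fOp L φ X ⊆ fOp L φ Y := by
  intro a ha
  exact (mem_fOp_iff φ Y a).2 (realize_mono hXY φ true hφ _ _ ((mem_fOp_iff φ X a).1 ha))

theorem stage_succ_subset (hφ : Positive true φ) (k : ℕ) :
    (fOp L φ (A := A))^[k] ∅ ⊆ (fOp L φ)^[k + 1] ∅ := by
  induction k with
  | zero => exact Set.empty_subset _
  | succ k ih =>
      rw [Function.iterate_succ_apply', Function.iterate_succ_apply']
      exact fOp_mono φ hφ ih

theorem stage_mono_le (hφ : Positive true φ) {k l : ℕ} (hkl : k ≤ l) :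
    (fOp L φ (A := A))^[k] ∅ ⊆ (fOp L φ)^[l] ∅ := by
  induction hkl with
  | refl => exact subset_rfl
  | step h ih => exact ih.trans (stage_succ_subset φ hφ _)

theorem stage_subset_prefixed (hφ : Positive true φ) {X : Set A} (hX : fOp L φ X ⊆ X) (k : ℕ) :
    (fOp L φ (A := A))^[k] ∅ ⊆ X := by
  induction k with
  | zero => exact Set.empty_subset _
  | succ k ih =>
      rw [Function.iterate_succ_apply']
      exact (fOp_mono φ hφ ih).trans hX

theorem stage_subset_lfp (hφ : Positive true φ) (k : ℕ) :
    (fOp L φ (A := A))^[k] ∅ ⊆ lfpSet (fOp L φ) :=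
  Set.subset_sInter fun _ hX => stage_subset_prefixed φ hφ hX k

omit [L.IsRelational] in
theorem lfpSet_subset_prefixed {X : Set A} (hX : fOp L φ X ⊆ X) :
    lfpSet (fOp L φ) ⊆ X :=
  Set.sInter_subset_of_mem hX

theorem lfp_eq_stage_of_fix (hφ : Positive true φ) {n : ℕ}
    (h : (fOp L φ (A := A))^[n] ∅ = (fOp L φ)^[n + 1] ∅) :
    lfpSet (fOp L φ (A := A)) = (fOp L φ)^[n] ∅ := by
  refine subset_antisymm (lfpSet_subset_prefixed φ ?_) (stage_subset_lfp φ hφ n)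
  have : fOp L φ ((fOp L φ (A := A))^[n] ∅) = (fOp L φ)^[n + 1] ∅ :=
    (Function.iterate_succ_apply' _ _ _).symm
  rw [this, ← h]

end Stages

/-- The formula defining the `k`-th stage. -/
def stFormula (φ : (L.sum unaryLang).Formula (Fin 1)) : ℕ → L.Formula (Fin 1)
  | 0 => ⊥
  | k + 1 => substP (stFormula φ k) φ

theorem stFormula_realize {A : Type} [L.Structure A] (φ : (L.sum unaryLang).Formula (Fin 1)) :
    ∀ (k : ℕ) (a : A), (stFormula φ k).Realize (fun _ => a) ↔ a ∈ (fOp L φ)^[k] ∅ := by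
  intro k
  induction k with
  | zero =>
      intro a
      simp [stFormula, FirstOrder.Language.Formula.realize_bot]
  | succ k ih =>
      intro a
      have hset : {x : A | (stFormula φ k).Realize (fun _ => x)} = (fOp L φ)^[k] ∅ :=
        Set.ext fun x => ih x
      rw [Function.iterate_succ_apply']
      constructor
      · intro h
        have h' := (substP_realize (stFormula φ k) φ (fun _ => a) default).1 h
        rw [hset] at h'
        exact (mem_fOp_iff φ _ a).2 h'
      · intro h
        refine (substP_realize (stFormula φ k) φ (fun _ => a) default).2 ?_
        rw [hset]
        exact (mem_fOp_iff φ _ a).1 h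

section Key

open Filter

variable {M : ℕ → Type} [∀ i, L.Structure (M i)] [∀ i, Nonempty (M i)]

/-- The ultraproduct of the family `M` over the hyperfilter. -/
abbrev UProd (M : ℕ → Type) : Type := Filter.Product (↑(Filter.hyperfilter ℕ) : Filter ℕ) M

/-- Class of a function in the ultraproduct. -/
noncomputable abbrev mkp (x : ∀ i, M i) : UProd M := ↑x

instance : Nonempty (UProd M) := ⟨mkp fun i => Classical.arbitrary (M i)⟩

theorem theta_realize {A : Type} [L.Structure A] (φ : (L.sum unaryLang).Formula (Fin 1)) (k : ℕ)
    {n : ℕ} (χ : (L.sum unaryLang).BoundedFormula (Fin 1) n) (v : Fin 1 → A) (xs : Fin n → A) :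
    (substP (stFormula φ k) χ).Realize v xs ↔ RealizeExt L ((fOp L φ)^[k] ∅) χ v xs := by
  rw [substP_realize]
  have hset : {a : A | (stFormula φ k).Realize (fun _ => a)} = (fOp L φ)^[k] ∅ :=
    Set.ext fun x => stFormula_realize φ k x
  rw [hset]

theorem key (φ : (L.sum unaryLang).Formula (Fin 1)) (hφ : Positive true φ)
    {n : ℕ} (χ : (L.sum unaryLang).BoundedFormula (Fin 1) n) :
    ∀ (b : Bool), Positive b χ →
    ∀ (v : Fin 1 → ∀ i, M i) (xs : Fin n → ∀ i, M i),
      (b = true →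
        RealizeExt L (⋃ k, (fOp L φ)^[k] ∅) χ (fun j => mkp (v j)) (fun j => mkp (xs j)) →
          ∃ k, RealizeExt L ((fOp L φ)^[k] ∅) χ (fun j => mkp (v j)) (fun j => mkp (xs j))) ∧
      (b = false →
        (∀ k, RealizeExt L ((fOp L φ)^[k] ∅) χ (fun j => mkp (v j)) (fun j => mkp (xs j))) →
          RealizeExt L (⋃ k, (fOp L φ)^[k] ∅) χ (fun j => mkp (v j)) (fun j => mkp (xs j))) := by
  classical
  induction χ with
  | falsum =>
      intro b _ v xs
      exact ⟨fun _ h => False.elim ((realizeExt_falsum _ _ _).1 h),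
        fun _ h => False.elim ((realizeExt_falsum _ _ _).1 (h 0))⟩
  | equal t₁ t₂ =>
      intro b _ v xs
      constructor
      · intro _ h
        exact ⟨0, (realizeExt_equal _ t₁ t₂ _ _).2 ((realizeExt_equal _ t₁ t₂ _ _).1 h)⟩
      · intro _ h
        exact (realizeExt_equal _ t₁ t₂ _ _).2 ((realizeExt_equal _ t₁ t₂ _ _).1 (h 0))
  | @rel m l R ts =>
      intro b hb v xs
      cases R with
      | inl r =>
          constructor
          · intro _ h
            exact ⟨0, (realizeExt_rel_inl _ r ts _ _).2 ((realizeExt_rel_inl _ r ts _ _).1 h)⟩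
          · intro _ h
            exact (realizeExt_rel_inl _ r ts _ _).2 ((realizeExt_rel_inl _ r ts _ _).1 (h 0))
      | inr r =>
          cases l with
          | zero => exact Empty.elim r
          | succ l =>
            cases l with
            | zero =>
                cases b with
                | false => exact hb.elim
                | true =>
                    refine ⟨fun _ h => ?_, fun hf => nomatch hf⟩
                    have h' := (realizeExt_rel_inr _ r ts _ _).1 h
                    rw [Set.mem_iUnion] at h'
                    obtain ⟨k, hk⟩ := h'
                    exact ⟨k, (realizeExt_rel_inr _ r ts _ _).2 hk⟩
            | succ l => exact Empty.elim r
  | imp f g ihf ihg =>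
      intro b hb v xs
      have h1 : Positive (!b) f := by cases b <;> exact hb.1
      have h2 : Positive b g := by cases b <;> exact hb.2
      cases b with
      | true =>
          refine ⟨fun _ h => ?_, fun hf => nomatch hf⟩
          rw [realizeExt_imp] at h
          by_cases hf :
            RealizeExt L (⋃ k, (fOp L φ)^[k] ∅) f (fun j => mkp (v j)) (fun j => mkp (xs j))
          · obtain ⟨k, hk⟩ := (ihg true h2 v xs).1 rfl (h hf)
            exact ⟨k, (realizeExt_imp _ f g _ _).2 fun _ => hk⟩
          · have hcp := (ihf false h1 v xs).2 rfl
            have hex : ∃ k,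
                ¬ RealizeExt L ((fOp L φ)^[k] ∅) f (fun j => mkp (v j)) (fun j => mkp (xs j)) := by
              by_contra hcon
              push_neg at hcon
              exact hf (hcp hcon)
            obtain ⟨k, hk⟩ := hex
            exact ⟨k, (realizeExt_imp _ f g _ _).2 fun hfk => absurd hfk hk⟩
      | false =>
          refine ⟨fun hf => Bool.noConfusion hf, fun _ h => ?_⟩
          rw [realizeExt_imp]
          intro hfω
          obtain ⟨k₀, hk₀⟩ := (ihf true h1 v xs).1 rfl hfω
          refine (ihg false h2 v xs).2 rfl fun k => ?_
          have hfk : RealizeExt L ((fOp L φ)^[max k k₀] ∅) f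
              (fun j => mkp (v j)) (fun j => mkp (xs j)) :=
            realize_mono (stage_mono_le φ hφ (le_max_right k k₀)) f true h1 _ _ hk₀
          have hgk := (realizeExt_imp _ f g _ _).1 (h (max k k₀)) hfk
          exact realize_mono (stage_mono_le φ hφ (le_max_left k k₀)) g false h2 _ _ hgk
  | @all m f ihf =>
      intro b hb v xs
      have hbf : Positive b f := by cases b <;> exact hb
      have hsnoc : ∀ w : ∀ i, M i,
          (fun j => mkp ((Fin.snoc xs w : Fin (m + 1) → ∀ i, M i) j)) =
            Fin.snoc (fun j => mkp (xs j)) (mkp w) := by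
        intro w
        funext j
        refine Fin.lastCases ?_ (fun jj => ?_) j
        · simp only [Fin.snoc_last]
        · simp only [Fin.snoc_castSucc]
      cases b with
      | false =>
          refine ⟨fun hf => Bool.noConfusion hf, fun _ h => ?_⟩
          rw [realizeExt_all]
          intro y
          obtain ⟨w, rfl⟩ := Quotient.exists_rep y
          have h2 : ∀ k, RealizeExt L ((fOp L φ)^[k] ∅) f
              (fun j => mkp (v j)) (fun j => mkp ((Fin.snoc xs w : Fin (m + 1) → ∀ i, M i) j)) := by
            intro k
            have hk := (realizeExt_all _ f _ _).1 (h k) (mkp w)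
            rwa [← hsnoc w] at hk
          have hres := (ihf false hbf v (Fin.snoc xs w)).2 rfl h2
          rw [hsnoc w] at hres
          exact hres
      | true =>
          refine ⟨fun _ hω => ?_, fun hf => nomatch hf⟩
          by_contra hcon
          push_neg at hcon
          have hwit : ∀ k : ℕ, ∃ w : ∀ i, M i,
              ¬ RealizeExt L ((fOp L φ)^[k] ∅) f (fun j => mkp (v j))
                  (fun j => mkp ((Fin.snoc xs w : Fin (m + 1) → ∀ i, M i) j)) := by
            intro k
            have hck := hcon k
            rw [realizeExt_all] at hck
            push_neg at hck
            obtain ⟨y, hy⟩ := hck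
            obtain ⟨w, rfl⟩ := Quotient.exists_rep y
            refine ⟨w, fun hcon2 => hy ?_⟩
            rwa [hsnoc w] at hcon2
          choose w hw using hwit
          set θ : ℕ → L.BoundedFormula (Fin 1) (m + 1) :=
            fun k => substP (stFormula φ k) f with hθdef
          -- the per-factor failure sets are large
          have hSk : ∀ k, ∀ᶠ i in (↑(Filter.hyperfilter ℕ) : Filter ℕ),
              ¬ (θ k).Realize (fun j => v j i) (fun j => (Fin.snoc xs (w k) : Fin (m + 1) → ∀ i, M i) j i) := by
            intro k
            rw [Ultrafilter.eventually_not]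
            intro hev
            apply hw k
            rw [← theta_realize φ k f]
            exact (Ultraproduct.boundedFormula_realize_cast (θ k) v (Fin.snoc xs (w k))).2 hev
          -- choose a diagonal witness
          let pred : ℕ → ℕ → Prop := fun i k =>
            ¬ (θ k).Realize (fun j => v j i) (fun j => (Fin.snoc xs (w k) : Fin (m + 1) → ∀ i, M i) j i)
          let h : ∀ i, M i := fun i => w (Nat.findGreatest (pred i) i) i
          have hθmono : ∀ (Aty : Type) [L.Structure Aty], ∀ {k k' : ℕ}, k ≤ k' →
              ∀ (vv : Fin 1 → Aty) (zz : Fin (m + 1) → Aty),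
                (θ k).Realize vv zz → (θ k').Realize vv zz := by
            intro Aty _ k k' hkk vv zz hreal
            rw [theta_realize φ k'] 
            rw [theta_realize φ k] at hreal
            exact realize_mono (stage_mono_le φ hφ hkk) f true hbf vv zz hreal
          have hT : ∀ k, ∀ᶠ i in (↑(Filter.hyperfilter ℕ) : Filter ℕ),
              ¬ (θ k).Realize (fun j => v j i) (fun j => (Fin.snoc xs h : Fin (m + 1) → ∀ i, M i) j i) := by
            intro k
            have hge : ∀ᶠ i in (↑(Filter.hyperfilter ℕ) : Filter ℕ), k ≤ i :=
              (Filter.eventually_ge_atTop k).filter_mono Nat.hyperfilter_le_atTop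
            filter_upwards [hSk k, hge] with i hSi hki
            have hm : pred i (Nat.findGreatest (pred i) i) := Nat.findGreatest_spec hki hSi
            have hkm : k ≤ Nat.findGreatest (pred i) i := Nat.le_findGreatest hki hSi
            intro hgoal
            apply hm
            have htup : (fun j => (Fin.snoc xs h : Fin (m + 1) → ∀ i, M i) j i) =
                (fun j => (Fin.snoc xs (w (Nat.findGreatest (pred i) i)) : Fin (m + 1) → ∀ i, M i) j i) := by
              funext j
              refine Fin.lastCases ?_ (fun jj => ?_) j
              · rw [Fin.snoc_last, Fin.snoc_last]
              · rw [Fin.snoc_castSucc, Fin.snoc_castSucc]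
            rw [htup] at hgoal
            exact hθmono (M i) hkm _ _ hgoal
          have hball : ∀ k, ¬ RealizeExt L ((fOp L φ)^[k] ∅) f
              (fun j => mkp (v j)) (fun j => mkp ((Fin.snoc xs h : Fin (m + 1) → ∀ i, M i) j)) := by
            intro k hreal
            rw [← theta_realize φ k f] at hreal
            have hev := (Ultraproduct.boundedFormula_realize_cast (θ k) v (Fin.snoc xs h)).1 hreal
            obtain ⟨i, hi1, hi2⟩ := ((hT k).and hev).exists
            exact hi1 hi2
          have hωh := (realizeExt_all _ f _ _).1 hω (mkp h)
          rw [← hsnoc h] at hωh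
          obtain ⟨k, hk⟩ := (ihf true hbf v (Fin.snoc xs h)).1 rfl hωh
          exact hball k hk

end Key

theorem realizeExt_zero_xs {A : Type} [L.Structure A] (X : Set A)
    (χ : (L.sum unaryLang).BoundedFormula (Fin 1) 0) (v : Fin 1 → A) (y z : Fin 0 → A) :
    RealizeExt L X χ v y ↔ RealizeExt L X χ v z :=
  iff_of_eq (congrArg _ (Subsingleton.elim y z))

end BM

open FirstOrder.Language

/-- The Barwise–Moschovakis theorem: `μP.φ` is FO-definable iff `φ(P,x)` is bounded. -/
theorem barwise_moschovakis (L : FirstOrder.Language) [L.IsRelational]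
    (φ : (L.sum unaryLang).Formula (Fin 1)) (hpos : Positive true φ) :
    (∃ ψ : L.Formula (Fin 1), ∀ (A : Type) [L.Structure A] [Nonempty A] (a : A),
        a ∈ lfpSet (fOp L φ) ↔ ψ.Realize (fun _ => a)) ↔
      Bounded L φ := by
  constructor
  · rintro ⟨ψ, hψ⟩
    by_contra hnb
    have hnb' : ∀ n : ℕ, ∃ (A : Type) (_ : L.Structure A) (_ : Nonempty A),
        (fOp L φ (A := A))^[n] ∅ ≠ (fOp L φ)^[n + 1] ∅ := by
      intro n
      by_contra hcon
      push_neg at hcon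
      exact hnb ⟨n, fun A iA nA => hcon A iA nA⟩
    choose Aty iA nA hne using hnb'
    letI : ∀ i, L.Structure (Aty i) := iA
    letI : ∀ i, Nonempty (Aty i) := nA
    have hss : ∀ n, ∃ x : Aty n, x ∈ (fOp L φ)^[n + 1] ∅ ∧ x ∉ (fOp L φ)^[n] ∅ := by
      intro n
      obtain ⟨x, hx1, hx2⟩ :=
        Set.exists_of_ssubset ((BM.stage_succ_subset φ hpos n).ssubset_of_ne (hne n))
      exact ⟨x, hx1, hx2⟩
    choose a ha1 ha2 using hss
    -- `ψ` holds at the diagonal point of the ultraproduct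
    have hψa : Formula.Realize (M := BM.UProd Aty) ψ (fun _ : Fin 1 => BM.mkp a) := by
      have := (Ultraproduct.realize_formula_cast (u := Filter.hyperfilter ℕ) ψ (fun _ : Fin 1 => a)).2
        (Filter.Eventually.of_forall fun i =>
          (hψ (Aty i) (a i)).1 (BM.stage_subset_lfp φ hpos (i + 1) (ha1 i)))
      exact this
    have hblfp : BM.mkp a ∈ lfpSet (fOp L φ (A := BM.UProd Aty)) :=
      (hψ (BM.UProd Aty) _).2 hψa
    -- the union of the finite stages is a prefixed point of `fOp`
    have hpre : fOp L φ (⋃ k, (fOp L φ (A := BM.UProd Aty))^[k] ∅) ⊆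
        ⋃ k, (fOp L φ)^[k] ∅ := by
      intro x hx
      obtain ⟨g, rfl⟩ := Quotient.exists_rep x
      have hx' : BM.RealizeExt L (⋃ k, (fOp L φ (A := BM.UProd Aty))^[k] ∅) φ
          (fun _ : Fin 1 => BM.mkp g) (fun j => BM.mkp (Fin.elim0 j)) :=
        (BM.realizeExt_zero_xs _ φ _ _ _).1 ((BM.mem_fOp_iff φ _ _).1 hx)
      obtain ⟨k, hk⟩ :=
        (BM.key φ hpos φ true hpos (fun _ => g) (fun j => Fin.elim0 j)).1 rfl hx'
      refine Set.mem_iUnion.2 ⟨k + 1, ?_⟩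
      rw [Function.iterate_succ_apply']
      exact (BM.mem_fOp_iff φ _ _).2 ((BM.realizeExt_zero_xs _ φ _ _ _).1 hk)
    have hω : BM.mkp a ∈ ⋃ k, (fOp L φ (A := BM.UProd Aty))^[k] ∅ :=
      BM.lfpSet_subset_prefixed φ hpre hblfp
    obtain ⟨k, hk⟩ := Set.mem_iUnion.1 hω
    -- but the diagonal point is in no finite stage: contradiction
    have hreal : (BM.stFormula φ k).Realize (fun _ : Fin 1 => BM.mkp a) :=
      (BM.stFormula_realize φ k _).2 hk
    have hev := (Ultraproduct.realize_formula_cast (u := Filter.hyperfilter ℕ)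
      (BM.stFormula φ k) (fun _ : Fin 1 => a)).1 hreal
    have hge : ∀ᶠ i in (↑(Filter.hyperfilter ℕ) : Filter ℕ), k ≤ i :=
      (Filter.eventually_ge_atTop k).filter_mono Nat.hyperfilter_le_atTop
    obtain ⟨i, h1, h2⟩ := (hev.and hge).exists
    exact ha2 i (BM.stage_mono_le φ hpos h2 ((BM.stFormula_realize φ k (a i)).1 h1))
  · rintro ⟨n, hn⟩
    refine ⟨BM.stFormula φ n, fun A iA nA a => ?_⟩
    rw [BM.stFormula_realize φ n a, BM.lfp_eq_stage_of_fix φ hpos (hn A)]
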